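/- arXiv:0912.1479 — 3 statements merged into one kernel-verified Lean document; each statement's English description precedes it below -/
import Mathlib

section
/- Let k : ℝ^d × ℝ^d → ℝ be a continuous symmetric positive semidefinite kernel, let (x_n)_{n≥1} be a sequence in ℝ^d, and let x ∈ ℝ^d. If x belongs to the closure of the set {x_n : n ≥ 1}, then the kriging variance σ²(x; x₁,…,x_n) converges to 0 as n → ∞. -/
open Filter

/-- The quadratic form `Qₙ(λ) = k(x,x) − 2 Σᵢ λᵢ k(x,xᵢ) + Σᵢⱼ λᵢλⱼ k(xᵢ,xⱼ)`. -/
noncomputable def krigQ {d : ℕ}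
    (k : EuclideanSpace ℝ (Fin d) → EuclideanSpace ℝ (Fin d) → ℝ)
    (x : EuclideanSpace ℝ (Fin d)) {n : ℕ}
    (pts : Fin n → EuclideanSpace ℝ (Fin d)) (lam : Fin n → ℝ) : ℝ :=
  k x x - 2 * ∑ i, lam i * k x (pts i)
    + ∑ i, ∑ j, lam i * lam j * k (pts i) (pts j)

/-- The kriging variance `σ²(x; x₁,…,x_n) = inf_{λ ∈ ℝⁿ} Qₙ(λ)`. -/
noncomputable def krigVar {d : ℕ}
    (k : EuclideanSpace ℝ (Fin d) → EuclideanSpace ℝ (Fin d) → ℝ)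
    (x : EuclideanSpace ℝ (Fin d)) {n : ℕ}
    (pts : Fin n → EuclideanSpace ℝ (Fin d)) : ℝ :=
  ⨅ lam : Fin n → ℝ, krigQ k x pts lam

lemma krigQ_nonneg {d : ℕ}
    (k : EuclideanSpace ℝ (Fin d) → EuclideanSpace ℝ (Fin d) → ℝ)
    (hk_symm : ∀ x y, k x y = k y x)
    (hk_psd : ∀ (n : ℕ) (pts : Fin n → EuclideanSpace ℝ (Fin d)) (c : Fin n → ℝ),
      0 ≤ ∑ i, ∑ j, c i * c j * k (pts i) (pts j))
    (x : EuclideanSpace ℝ (Fin d)) {n : ℕ}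
    (pts : Fin n → EuclideanSpace ℝ (Fin d)) (lam : Fin n → ℝ) :
    0 ≤ krigQ k x pts lam := by
  have h := hk_psd (n+1) (Fin.cons x pts) (Fin.cons 1 (fun i => -lam i))
  simp only [Fin.sum_univ_succ, Fin.cons_zero, Fin.cons_succ] at h
  have hsymm : ∀ i, k (pts i) x = k x (pts i) := fun i => hk_symm _ _
  unfold krigQ
  calc (0:ℝ) ≤ _ := h
    _ = _ := by
      simp only [hsymm, one_mul, mul_one, neg_mul, mul_neg, neg_neg,
        Finset.sum_neg_distrib, Finset.sum_add_distrib]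
      ring

lemma krigVar_nonneg {d : ℕ}
    (k : EuclideanSpace ℝ (Fin d) → EuclideanSpace ℝ (Fin d) → ℝ)
    (hk_symm : ∀ x y, k x y = k y x)
    (hk_psd : ∀ (n : ℕ) (pts : Fin n → EuclideanSpace ℝ (Fin d)) (c : Fin n → ℝ),
      0 ≤ ∑ i, ∑ j, c i * c j * k (pts i) (pts j))
    (x : EuclideanSpace ℝ (Fin d)) {n : ℕ}
    (pts : Fin n → EuclideanSpace ℝ (Fin d)) :
    0 ≤ krigVar k x pts :=
  Real.iInf_nonneg (fun lam => krigQ_nonneg k hk_symm hk_psd x pts lam)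

lemma krigVar_le {d : ℕ}
    (k : EuclideanSpace ℝ (Fin d) → EuclideanSpace ℝ (Fin d) → ℝ)
    (hk_symm : ∀ x y, k x y = k y x)
    (hk_psd : ∀ (n : ℕ) (pts : Fin n → EuclideanSpace ℝ (Fin d)) (c : Fin n → ℝ),
      0 ≤ ∑ i, ∑ j, c i * c j * k (pts i) (pts j))
    (x : EuclideanSpace ℝ (Fin d)) {n : ℕ}
    (pts : Fin n → EuclideanSpace ℝ (Fin d)) (lam : Fin n → ℝ) :
    krigVar k x pts ≤ krigQ k x pts lam :=
  ciInf_le ⟨0, fun _ ⟨l, hl⟩ => hl ▸ krigQ_nonneg k hk_symm hk_psd x pts l⟩ lam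

lemma krigQ_single {d : ℕ}
    (k : EuclideanSpace ℝ (Fin d) → EuclideanSpace ℝ (Fin d) → ℝ)
    (x : EuclideanSpace ℝ (Fin d)) {n : ℕ}
    (pts : Fin n → EuclideanSpace ℝ (Fin d)) (i0 : Fin n) :
    krigQ k x pts (Pi.single i0 1)
      = k x x - 2 * k x (pts i0) + k (pts i0) (pts i0) := by
  unfold krigQ
  congr 1
  · congr 1
    congr 1
    rw [Finset.sum_eq_single i0]
    · simp
    · intro b _ hb; simp [Pi.single_apply, hb]
    · simp
  · rw [Finset.sum_eq_single i0]
    · rw [Finset.sum_eq_single i0]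
      · simp
      · intro b _ hb; simp [Pi.single_apply, hb]
      · simp
    · intro b _ hb
      apply Finset.sum_eq_zero
      intro j _
      simp [Pi.single_apply, hb]
    · simp


/-- If `k` is a continuous symmetric positive semidefinite kernel and `x` is in the
closure of `{xₙ : n ≥ 1}`, then the kriging variance `σ²(x; x₁,…,x_n)` tends to `0`. -/
theorem kriging_variance_tendsto_zero_of_mem_closure {d : ℕ}
    (k : EuclideanSpace ℝ (Fin d) → EuclideanSpace ℝ (Fin d) → ℝ)
    (hk_cont : Continuous fun p : EuclideanSpace ℝ (Fin d) × EuclideanSpace ℝ (Fin d) =>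
      k p.1 p.2)
    (hk_symm : ∀ x y, k x y = k y x)
    (hk_psd : ∀ (n : ℕ) (pts : Fin n → EuclideanSpace ℝ (Fin d)) (c : Fin n → ℝ),
      0 ≤ ∑ i, ∑ j, c i * c j * k (pts i) (pts j))
    (xs : ℕ → EuclideanSpace ℝ (Fin d)) (x : EuclideanSpace ℝ (Fin d))
    (hx : x ∈ closure (Set.range xs)) :
    Tendsto (fun n : ℕ => krigVar k x (fun i : Fin n => xs i)) atTop (nhds 0) := by
  rw [tendsto_order]
  constructor
  · intro a ha
    filter_upwards with n
    exact lt_of_lt_of_le ha (krigVar_nonneg k hk_symm hk_psd x _)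
  · intro a ha
    -- the function g y = k x x - 2 k x y + k y y is continuous and g x = 0
    have hg : Continuous fun y => k x x - 2 * k x y + k y y := by
      have h1 : Continuous fun y : EuclideanSpace ℝ (Fin d) => k x y :=
        hk_cont.comp (continuous_const.prodMk continuous_id)
      have h2 : Continuous fun y : EuclideanSpace ℝ (Fin d) => k y y :=
        hk_cont.comp (continuous_id.prodMk continuous_id)
      continuity
    have hgx : (fun y => k x x - 2 * k x y + k y y) x = 0 := by ring
    have hopen : IsOpen {y | k x x - 2 * k x y + k y y < a} :=
      isOpen_lt hg continuous_const
    have hxmem : x ∈ {y | k x x - 2 * k x y + k y y < a} := by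
      simp only [Set.mem_setOf_eq]
      calc k x x - 2 * k x x + k x x = 0 := by ring
        _ < a := ha
    obtain ⟨y, hy1, hy2⟩ := _root_.mem_closure_iff.mp hx _ hopen hxmem
    obtain ⟨i, rfl⟩ := hy2
    filter_upwards [eventually_ge_atTop (i + 1)] with n hn
    have hi : i < n := hn
    have hle := krigVar_le k hk_symm hk_psd x (fun j : Fin n => xs j) (Pi.single ⟨i, hi⟩ 1)
    rw [krigQ_single] at hle
    exact lt_of_le_of_lt hle hy1
end

section
/- Let S : ℝ^d → [0,∞) be integrable with S(u)(1+‖u‖^r) ≥ C for almost every u, for some C > 0 and r ∈ ℕ, and let k(x,y) = ∫_{ℝ^d} cos(⟨u, x−y⟩) S(u) du. Let (x_n)_{n≥1} be a sequence in ℝ^d, let x ∈ ℝ^d be in the closure of {x_n : n ≥ 1}, and for each n let λ⁽ⁿ⁾ ∈ ℝⁿ be a minimizer of the quadratic form Qₙ(λ) = k(x,x) − 2 Σᵢ λᵢ k(x,xᵢ) + Σᵢⱼ λᵢλⱼ k(xᵢ,xⱼ). Then for every Schwartz function f ∈ 𝒮(ℝ^d), Σᵢ₌₁ⁿ λ⁽ⁿ⁾ᵢ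 f(xᵢ) → f(x) as n → ∞. -/
open MeasureTheory Filter
open scoped RealInnerProductSpace

section Aux
open Complex SchwartzMap
open scoped FourierTransform

variable {d : ℕ}

lemma young_aux (p q u : ℝ) (hu : 0 < u) : p * q ≤ u * p ^ 2 + q ^ 2 / (4 * u) := by
  have h4u : (0:ℝ) < 4 * u := by positivity
  have h : p * q - u * p ^ 2 ≤ q ^ 2 / (4 * u) := by
    rw [sub_le_iff_le_add]
    rw [div_add' _ _ _ (ne_of_gt h4u), le_div_iff₀ h4u]
    nlinarith [sq_nonneg (2 * u * p - q)]
  linarith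

lemma normsq_expand {n : ℕ} (a θ : Fin n → ℝ) (θ0 : ℝ) :
    ‖(∑ i, (a i : ℂ) * Complex.exp (θ i * Complex.I)) - Complex.exp (θ0 * Complex.I)‖ ^ 2
      = 1 - 2 * ∑ i, a i * Real.cos (θ0 - θ i)
        + ∑ i, ∑ j, a i * a j * Real.cos (θ i - θ j) := by
  have hre : ((∑ i, (a i : ℂ) * Complex.exp (θ i * Complex.I)) - Complex.exp (θ0 * Complex.I)).re
      = (∑ i, a i * Real.cos (θ i)) - Real.cos θ0 := by
    simp [Complex.exp_ofReal_mul_I_re]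
  have him : ((∑ i, (a i : ℂ) * Complex.exp (θ i * Complex.I)) - Complex.exp (θ0 * Complex.I)).im
      = (∑ i, a i * Real.sin (θ i)) - Real.sin θ0 := by
    simp [Complex.exp_ofReal_mul_I_im]
  rw [Complex.sq_norm, Complex.normSq_apply, hre, him]
  simp only [Real.cos_sub]
  have h0 : Real.cos θ0 ^ 2 + Real.sin θ0 ^ 2 = 1 := Real.cos_sq_add_sin_sq θ0
  have hc : (∑ i, a i * Real.cos (θ i)) ^ 2
      = ∑ i, ∑ j, (a i * Real.cos (θ i)) * (a j * Real.cos (θ j)) := by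
    rw [sq, Finset.sum_mul_sum]
  have hs : (∑ i, a i * Real.sin (θ i)) ^ 2
      = ∑ i, ∑ j, (a i * Real.sin (θ i)) * (a j * Real.sin (θ j)) := by
    rw [sq, Finset.sum_mul_sum]
  have hsum : ∑ i, ∑ j, a i * a j * (Real.cos (θ i) * Real.cos (θ j) + Real.sin (θ i) * Real.sin (θ j))
      = (∑ i, ∑ j, (a i * Real.cos (θ i)) * (a j * Real.cos (θ j)))
        + ∑ i, ∑ j, (a i * Real.sin (θ i)) * (a j * Real.sin (θ j)) := by
    rw [← Finset.sum_add_distrib]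
    refine Finset.sum_congr rfl fun i _ => ?_
    rw [← Finset.sum_add_distrib]
    refine Finset.sum_congr rfl fun j _ => ?_
    ring
  have hcross : ∑ i, a i * (Real.cos θ0 * Real.cos (θ i) + Real.sin θ0 * Real.sin (θ i))
      = Real.cos θ0 * ∑ i, a i * Real.cos (θ i) + Real.sin θ0 * ∑ i, a i * Real.sin (θ i) := by
    rw [Finset.mul_sum, Finset.mul_sum, ← Finset.sum_add_distrib]
    refine Finset.sum_congr rfl fun i _ => ?_; ring
  rw [hsum, hcross]
  nlinarith [h0]

lemma cos_mul_S_integrable (S : EuclideanSpace ℝ (Fin d) → ℝ)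
    (hS_nonneg : ∀ u, 0 ≤ S u) (hS_int : Integrable S) (h : EuclideanSpace ℝ (Fin d)) :
    Integrable (fun u : EuclideanSpace ℝ (Fin d) => Real.cos ⟪u, h⟫ * S u) := by
  refine hS_int.mono' ?_ ?_
  · exact (Real.continuous_cos.comp (continuous_id.inner continuous_const)).aestronglyMeasurable.mul
      hS_int.1
  · filter_upwards with u
    rw [norm_mul]
    calc ‖Real.cos ⟪u, h⟫‖ * ‖S u‖ ≤ 1 * ‖S u‖ := by
          gcongr; exact (Real.abs_cos_le_one _)
      _ = S u := by rw [one_mul, Real.norm_eq_abs, _root_.abs_of_nonneg (hS_nonneg u)]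

lemma krigQ_eq_integral (S : EuclideanSpace ℝ (Fin d) → ℝ)
    (hS_nonneg : ∀ u, 0 ≤ S u) (hS_int : Integrable S)
    (k : EuclideanSpace ℝ (Fin d) → EuclideanSpace ℝ (Fin d) → ℝ)
    (hk : ∀ x y, k x y = ∫ u, Real.cos ⟪u, x - y⟫ * S u)
    (x : EuclideanSpace ℝ (Fin d)) {n : ℕ}
    (pts : Fin n → EuclideanSpace ℝ (Fin d)) (a : Fin n → ℝ) :
    krigQ k x pts a = ∫ u, ‖(∑ i, (a i : ℂ) * Complex.exp ((⟪u, pts i⟫ : ℝ) * Complex.I))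
        - Complex.exp ((⟪u, x⟫ : ℝ) * Complex.I)‖ ^ 2 * S u := by
  have hptw : ∀ u : EuclideanSpace ℝ (Fin d),
      ‖(∑ i, (a i : ℂ) * Complex.exp ((⟪u, pts i⟫ : ℝ) * Complex.I))
        - Complex.exp ((⟪u, x⟫ : ℝ) * Complex.I)‖ ^ 2 * S u
      = S u - 2 * ∑ i, a i * (Real.cos ⟪u, x - pts i⟫ * S u)
        + ∑ i, ∑ j, a i * a j * (Real.cos ⟪u, pts i - pts j⟫ * S u) := by
    intro u
    rw [normsq_expand]
    have e1 : ∀ i, Real.cos ((⟪u, x⟫ : ℝ) - ⟪u, pts i⟫) = Real.cos ⟪u, x - pts i⟫ := by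
      intro i; rw [inner_sub_right]
    have e2 : ∀ i j, Real.cos ((⟪u, pts i⟫ : ℝ) - ⟪u, pts j⟫) = Real.cos ⟪u, pts i - pts j⟫ := by
      intro i j; rw [inner_sub_right]
    simp only [e1, e2]
    have hr : ∀ (A B SS : ℝ), (1 - 2 * A + B) * SS = SS - 2 * (A * SS) + B * SS := by
      intros; ring
    rw [hr]
    congr 1
    · congr 2
      rw [Finset.sum_mul]
      exact Finset.sum_congr rfl fun i _ => by ring
    · rw [Finset.sum_mul]
      refine Finset.sum_congr rfl fun i _ => ?_
      rw [Finset.sum_mul]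
      exact Finset.sum_congr rfl fun j _ => by ring
  simp only [hptw]
  have I2 : Integrable (fun u : EuclideanSpace ℝ (Fin d) =>
      2 * ∑ i, a i * (Real.cos ⟪u, x - pts i⟫ * S u)) := by
    refine Integrable.const_mul ?_ 2
    exact integrable_finset_sum _ fun i _ =>
      (cos_mul_S_integrable S hS_nonneg hS_int _).const_mul _
  have I3 : Integrable (fun u : EuclideanSpace ℝ (Fin d) =>
      ∑ i, ∑ j, a i * a j * (Real.cos ⟪u, pts i - pts j⟫ * S u)) :=
    integrable_finset_sum _ fun i _ => integrable_finset_sum _ fun j _ =>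
      (cos_mul_S_integrable S hS_nonneg hS_int _).const_mul _
  have hI1 : ∀ h, Integrable (fun u : EuclideanSpace ℝ (Fin d) =>
      Real.cos ⟪u, h⟫ * S u) := cos_mul_S_integrable S hS_nonneg hS_int
  have I12 : Integrable (fun u : EuclideanSpace ℝ (Fin d) =>
      S u - 2 * ∑ i, a i * (Real.cos ⟪u, x - pts i⟫ * S u)) := hS_int.sub I2
  rw [integral_add I12 I3, integral_sub hS_int I2]
  have hxx : (∫ u : EuclideanSpace ℝ (Fin d), S u) = k x x := by
    rw [hk]
    congr 1; ext u; rw [sub_self]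
    simp
  have hsum1 : (∫ u : EuclideanSpace ℝ (Fin d),
      2 * ∑ i, a i * (Real.cos ⟪u, x - pts i⟫ * S u)) = 2 * ∑ i, a i * k x (pts i) := by
    rw [integral_const_mul, integral_finset_sum _ fun i _ => (hI1 _).const_mul _]
    congr 1
    refine Finset.sum_congr rfl fun i _ => ?_
    rw [integral_const_mul, hk]
  have hsum2 : (∫ u : EuclideanSpace ℝ (Fin d),
      ∑ i, ∑ j, a i * a j * (Real.cos ⟪u, pts i - pts j⟫ * S u))
      = ∑ i, ∑ j, a i * a j * k (pts i) (pts j) := by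
    rw [integral_finset_sum _ fun i _ => integrable_finset_sum _ fun j _ => (hI1 _).const_mul _]
    refine Finset.sum_congr rfl fun i _ => ?_
    rw [integral_finset_sum _ fun j _ => (hI1 _).const_mul _]
    refine Finset.sum_congr rfl fun j _ => ?_
    rw [integral_const_mul, hk]
  rw [hxx, hsum1, hsum2]
  rfl


lemma krigQ_unit (k : EuclideanSpace ℝ (Fin d) → EuclideanSpace ℝ (Fin d) → ℝ)
    (x : EuclideanSpace ℝ (Fin d)) {n : ℕ} (pts : Fin n → EuclideanSpace ℝ (Fin d))
    (j : Fin n) :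
    krigQ k x pts (fun i => if i = j then (1:ℝ) else 0)
      = k x x - 2 * k x (pts j) + k (pts j) (pts j) := by
  unfold krigQ
  congr 2
  · congr 1
    rw [Finset.sum_eq_single j]
    · simp
    · intro i _ hij; simp [hij]
    · simp
  · rw [Finset.sum_eq_single j]
    · rw [Finset.sum_eq_single j]
      · simp
      · intro i _ hij; simp [hij]
      · simp
    · intro i _ hij; simp [hij]
    · simp

lemma krig_var_tendsto_zero (S : EuclideanSpace ℝ (Fin d) → ℝ)
    (hS_nonneg : ∀ u, 0 ≤ S u) (hS_int : Integrable S)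
    (k : EuclideanSpace ℝ (Fin d) → EuclideanSpace ℝ (Fin d) → ℝ)
    (hk : ∀ x y, k x y = ∫ u, Real.cos ⟪u, x - y⟫ * S u)
    (xs : ℕ → EuclideanSpace ℝ (Fin d)) (x : EuclideanSpace ℝ (Fin d))
    (hx : x ∈ closure (Set.range xs))
    (lam : (n : ℕ) → Fin n → ℝ)
    (hlam : ∀ (n : ℕ) (mu : Fin n → ℝ),
      krigQ k x (fun i : Fin n => xs i) (lam n) ≤ krigQ k x (fun i : Fin n => xs i) mu)
    (hQnonneg : ∀ n : ℕ, 0 ≤ krigQ k x (fun i : Fin n => xs i) (lam n)) :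
    Tendsto (fun n : ℕ => krigQ k x (fun i : Fin n => xs i) (lam n)) atTop (nhds 0) := by
  -- sequence approaching x
  obtain ⟨y, hy_mem, hy_lim⟩ := mem_closure_iff_seq_limit.1 hx
  choose idx hidx using hy_mem
  -- kernel diagonal values
  have hkyy : ∀ z : EuclideanSpace ℝ (Fin d), k z z = ∫ u, S u := by
    intro z; rw [hk]
    congr 1; ext u; rw [sub_self]; simp
  -- dominated convergence : k x (y m) → ∫ S
  have hkc : Tendsto (fun m => k x (y m)) atTop (nhds (∫ u, S u)) := by
    have : ∀ m, k x (y m) = ∫ u, Real.cos ⟪u, x - y m⟫ * S u := fun m => hk _ _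
    simp only [this]
    refine tendsto_integral_of_dominated_convergence S
      (fun m => ?_) hS_int (fun m => ?_) ?_
    · exact (Real.continuous_cos.comp (continuous_id.inner continuous_const)).aestronglyMeasurable.mul
        hS_int.1
    · filter_upwards with u
      rw [norm_mul]
      calc ‖Real.cos ⟪u, x - y m⟫‖ * ‖S u‖ ≤ 1 * ‖S u‖ := by
            gcongr; exact Real.abs_cos_le_one _
        _ = S u := by rw [one_mul, Real.norm_eq_abs, _root_.abs_of_nonneg (hS_nonneg u)]
    · filter_upwards with u
      have h1 : Tendsto (fun m => x - y m) atTop (nhds 0) := by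
        simpa using (tendsto_const_nhds (x := x)).sub hy_lim
      have h2 : Tendsto (fun m => Real.cos ⟪u, x - y m⟫ * S u) atTop
          (nhds (Real.cos ⟪u, (0 : EuclideanSpace ℝ (Fin d))⟫ * S u)) := by
        exact ((Real.continuous_cos.comp (continuous_const.inner continuous_id)).tendsto _
          |>.comp h1).mul_const _
      simpa using h2
  -- conclude
  rw [Metric.tendsto_atTop]
  intro ε hε
  have hT : Tendsto (fun m => 2 * ((∫ u, S u) - k x (y m))) atTop (nhds 0) := by
    have := (tendsto_const_nhds (x := (∫ u, S u))).sub hkc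
    simpa using (this.const_mul 2)
  obtain ⟨M, hM⟩ := Metric.tendsto_atTop.1 hT ε hε
  have hTm : 2 * ((∫ u, S u) - k x (y M)) < ε := by
    have h1 := hM M le_rfl
    rw [Real.dist_eq, sub_zero] at h1
    exact lt_of_le_of_lt (le_abs_self _) h1
  refine ⟨idx M + 1, fun n hn => ?_⟩
  have hjlt : idx M < n := lt_of_lt_of_le (Nat.lt_succ_self _) hn
  set j : Fin n := ⟨idx M, hjlt⟩ with hj
  have hb := hlam n (fun i => if i = j then (1:ℝ) else 0)
  rw [krigQ_unit] at hb
  have hxsj : xs (j : ℕ) = y M := hidx M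
  rw [Real.dist_eq, sub_zero, _root_.abs_of_nonneg (hQnonneg n)]
  calc krigQ k x (fun i : Fin n => xs i) (lam n)
      ≤ k x x - 2 * k x (xs (j : ℕ)) + k (xs (j : ℕ)) (xs (j : ℕ)) := hb
    _ = 2 * ((∫ u, S u) - k x (y M)) := by
        rw [hxsj, hkyy x, hkyy (y M)]; ring
    _ < ε := hTm


/-- A real Schwartz function, viewed as a complex-valued Schwartz function. -/
noncomputable def complexify (f : SchwartzMap (EuclideanSpace ℝ (Fin d)) ℝ) :
    SchwartzMap (EuclideanSpace ℝ (Fin d)) ℂ where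
  toFun := fun y => (f y : ℂ)
  smooth' := (RCLike.ofRealLI (K := ℂ)).toContinuousLinearMap.contDiff.comp f.smooth'
  decay' := by
    intro k n
    obtain ⟨c, hc⟩ := f.decay' k n
    refine ⟨c, fun y => ?_⟩
    have heq : ‖iteratedFDeriv ℝ n (fun y => ((f y : ℝ) : ℂ)) y‖
        = ‖iteratedFDeriv ℝ n f y‖ := by
      have := (RCLike.ofRealLI (K := ℂ)).norm_iteratedFDeriv_comp_left
        (f := (f : EuclideanSpace ℝ (Fin d) → ℝ)) (f.smooth'.contDiffAt (x := y)) (i := n)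
        (by exact_mod_cast le_top)
      simp [Function.comp] at this
      exact this
    rw [heq]; exact hc y

lemma complexify_apply (f : SchwartzMap (EuclideanSpace ℝ (Fin d)) ℝ) (y) :
    complexify f y = (f y : ℂ) := rfl

lemma fourier_rep (f : SchwartzMap (EuclideanSpace ℝ (Fin d)) ℝ) (r : ℕ) :
    ∃ φ : EuclideanSpace ℝ (Fin d) → ℂ, Continuous φ ∧
      (∃ B : ℝ, ∀ v, ‖φ v‖ ≤ B) ∧
      Integrable (fun v => ‖φ v‖ * (1 + ‖v‖ ^ r)) ∧
      ∀ y, f y = (∫ v, φ v * Complex.exp ((⟪v, y⟫ : ℝ) * Complex.I)).re := by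
  set fc := complexify f with hfc
  set F := fourierTransformCLM ℂ fc with hF
  set c : ℝ := 2 * Real.pi with hc
  have hcpos : 0 < c := by positivity
  have hc0 : c ≠ 0 := ne_of_gt hcpos
  have hcd : (0:ℝ) < c ^ d := by positivity
  refine ⟨fun v => ((c ^ d : ℝ) : ℂ)⁻¹ * F (c⁻¹ • v), ?_, ?_, ?_, ?_⟩
  · exact continuous_const.mul (F.continuous.comp (continuous_const_smul _))
  · refine ⟨(c ^ d)⁻¹ * (SchwartzMap.seminorm ℝ 0 0) F, fun v => ?_⟩
    rw [norm_mul]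
    gcongr
    · rw [norm_inv, Complex.norm_real, Real.norm_eq_abs, abs_of_pos hcd]
    · exact norm_le_seminorm ℝ F _
  · -- weighted integrability
    have hH : Integrable (fun u : EuclideanSpace ℝ (Fin d) => ‖F u‖ * (1 + ‖c • u‖ ^ r)) := by
      have h1 : Integrable (fun u : EuclideanSpace ℝ (Fin d) =>
          ‖F u‖ + c ^ r * (‖u‖ ^ r * ‖F u‖)) :=
        F.integrable.norm.add ((F.integrable_pow_mul volume r).const_mul _)
      refine h1.congr (Eventually.of_forall fun u => ?_)
      simp only [norm_smul, Real.norm_eq_abs, abs_of_pos hcpos, mul_pow]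
      ring
    have hH2 : Integrable (fun v : EuclideanSpace ℝ (Fin d) =>
        ‖F (c⁻¹ • v)‖ * (1 + ‖c • (c⁻¹ • v)‖ ^ r)) := hH.comp_smul (inv_ne_zero hc0)
    have hH3 : Integrable (fun v : EuclideanSpace ℝ (Fin d) =>
        (c ^ d)⁻¹ * (‖F (c⁻¹ • v)‖ * (1 + ‖c • (c⁻¹ • v)‖ ^ r))) := hH2.const_mul _
    refine hH3.congr (Eventually.of_forall fun v => ?_)
    simp only [smul_inv_smul₀ hc0, norm_mul]
    have hnc : ‖((c ^ d : ℝ) : ℂ)⁻¹‖ = (c ^ d)⁻¹ := by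
      rw [norm_inv, Complex.norm_real, Real.norm_eq_abs, abs_of_pos hcd]
    rw [hnc]; ring
  · -- representation
    intro y
    have hFinv : 𝓕⁻ (𝓕 (fc : EuclideanSpace ℝ (Fin d) → ℂ)) = fc :=
      fc.continuous.fourierInv_fourier_eq fc.integrable
        (by rw [← SchwartzMap.fourier_coe, ← fourierTransformCLM_apply (𝕜 := ℂ)]; exact F.integrable)
    have hptw : ∀ v : EuclideanSpace ℝ (Fin d),
        (fun u => F u * Complex.exp ((c * ⟪u, y⟫ : ℝ) * Complex.I)) (c⁻¹ • v)
        = F (c⁻¹ • v) * Complex.exp ((⟪v, y⟫ : ℝ) * Complex.I) := by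
      intro v
      simp only
      have h1 : c * ⟪c⁻¹ • v, y⟫ = ⟪v, y⟫ := by
        rw [real_inner_smul_left, ← mul_assoc, mul_inv_cancel₀ hc0, one_mul]
      rw [h1]
    have key : (∫ v, ((c ^ d : ℝ) : ℂ)⁻¹ * F (c⁻¹ • v) * Complex.exp ((⟪v, y⟫ : ℝ) * Complex.I))
        = fc y := by
      have step1 : (∫ v, ((c ^ d : ℝ) : ℂ)⁻¹ * F (c⁻¹ • v)
            * Complex.exp ((⟪v, y⟫ : ℝ) * Complex.I))
          = ((c ^ d : ℝ) : ℂ)⁻¹ * ∫ v, (fun u => F u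
            * Complex.exp ((c * ⟪u, y⟫ : ℝ) * Complex.I)) (c⁻¹ • v) := by
        rw [← integral_const_mul]
        congr 1; ext v
        rw [hptw v]; ring
      have step2 : (∫ v : EuclideanSpace ℝ (Fin d), (fun u => F u
            * Complex.exp ((c * ⟪u, y⟫ : ℝ) * Complex.I)) (c⁻¹ • v))
          = |c ^ Module.finrank ℝ (EuclideanSpace ℝ (Fin d))| •
            ∫ u, F u * Complex.exp ((c * ⟪u, y⟫ : ℝ) * Complex.I) :=
        Measure.integral_comp_inv_smul volume
          (fun u => F u * Complex.exp ((c * ⟪u, y⟫ : ℝ) * Complex.I)) c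
      have habs : |c ^ Module.finrank ℝ (EuclideanSpace ℝ (Fin d))| = c ^ d := by
        rw [finrank_euclideanSpace_fin, abs_of_pos (by positivity)]
      have step3 : (∫ u : EuclideanSpace ℝ (Fin d), F u
            * Complex.exp ((c * ⟪u, y⟫ : ℝ) * Complex.I)) = fc y := by
        conv_rhs => rw [← hFinv]
        rw [Real.fourierInv_eq']
        rw [← SchwartzMap.fourier_coe, ← fourierTransformCLM_apply (𝕜 := ℂ) fc, ← hF]
        congr 1; ext u
        rw [smul_eq_mul, mul_comm]
      rw [step1, step2, habs, step3]
      rw [real_smul]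
      rw [← mul_assoc, inv_mul_cancel₀, one_mul]
      exact_mod_cast (ne_of_gt hcd)
    rw [key, complexify_apply, Complex.ofReal_re]


end Aux
/-- Under the polynomial-growth spectral condition, if `x` is adherent to the
sequence of design points and `λ⁽ⁿ⁾` are kriging coefficients (minimizers of `Qₙ`),
then the kriging predictions of any Schwartz function `f` converge: `Σᵢ λ⁽ⁿ⁾ᵢ f(xᵢ) → f(x)`. -/
theorem schwartz_pointwise_consistency {d : ℕ}
    (S : EuclideanSpace ℝ (Fin d) → ℝ)
    (hS_nonneg : ∀ u, 0 ≤ S u) (hS_int : Integrable S)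
    (C : ℝ) (hC : 0 < C) (r : ℕ)
    (hS_low : ∀ᵐ u : EuclideanSpace ℝ (Fin d), C ≤ S u * (1 + ‖u‖ ^ r))
    (k : EuclideanSpace ℝ (Fin d) → EuclideanSpace ℝ (Fin d) → ℝ)
    (hk : ∀ x y, k x y = ∫ u, Real.cos ⟪u, x - y⟫ * S u)
    (xs : ℕ → EuclideanSpace ℝ (Fin d)) (x : EuclideanSpace ℝ (Fin d))
    (hx : x ∈ closure (Set.range xs))
    (lam : (n : ℕ) → Fin n → ℝ)
    (hlam : ∀ (n : ℕ) (mu : Fin n → ℝ),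
      krigQ k x (fun i : Fin n => xs i) (lam n) ≤ krigQ k x (fun i : Fin n => xs i) mu)
    (f : SchwartzMap (EuclideanSpace ℝ (Fin d)) ℝ) :
    Tendsto (fun n : ℕ => ∑ i : Fin n, lam n i * f (xs i)) atTop (nhds (f x)) := by
  classical
  obtain ⟨φ, hφc, ⟨B, hB⟩, hφw, hφrep⟩ := fourier_rep f r
  -- the function gₙ
  set g : (n : ℕ) → EuclideanSpace ℝ (Fin d) → ℂ := fun n v =>
    (∑ i : Fin n, (lam n i : ℂ) * Complex.exp ((⟪v, xs i⟫ : ℝ) * Complex.I))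
      - Complex.exp ((⟪v, x⟫ : ℝ) * Complex.I) with hgdef
  have hexpc : ∀ y : EuclideanSpace ℝ (Fin d),
      Continuous (fun v : EuclideanSpace ℝ (Fin d) =>
        Complex.exp ((⟪v, y⟫ : ℝ) * Complex.I)) := by
    intro y
    exact Complex.continuous_exp.comp
      ((Complex.continuous_ofReal.comp (continuous_id.inner continuous_const)).mul
        continuous_const)
  have hgcont : ∀ n, Continuous (g n) := by
    intro n
    simp only [hgdef]
    exact (continuous_finset_sum _ fun (i : Fin n) _ => continuous_const.mul (hexpc (xs i))).sub (hexpc x)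
  have hnormexp : ∀ (y : EuclideanSpace ℝ (Fin d)) v,
      ‖Complex.exp ((⟪v, y⟫ : ℝ) * Complex.I)‖ = 1 := by
    intro y v
    rw [Complex.norm_exp_ofReal_mul_I]
  have hgbdd : ∀ n v, ‖g n v‖ ≤ (∑ i : Fin n, |lam n i|) + 1 := by
    intro n v
    refine (norm_sub_le _ _).trans ?_
    gcongr
    · refine (norm_sum_le _ _).trans ?_
      refine Finset.sum_le_sum fun i _ => ?_
      rw [norm_mul, hnormexp, mul_one, Complex.norm_real, Real.norm_eq_abs]
    · rw [hnormexp]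
  -- the kriging variance
  have hσ : ∀ n, krigQ k x (fun i : Fin n => xs i) (lam n) = ∫ u, ‖g n u‖ ^ 2 * S u := by
    intro n
    exact krigQ_eq_integral S hS_nonneg hS_int k hk x (fun i : Fin n => xs i) (lam n)
  have hIg2 : ∀ n, Integrable (fun v => ‖g n v‖ ^ 2 * S v) := by
    intro n
    set M : ℝ := (∑ i : Fin n, |lam n i|) + 1 with hM
    refine (hS_int.const_mul (M ^ 2)).mono' ?_ ?_
    · exact (((hgcont n).norm.pow 2).aestronglyMeasurable).mul hS_int.1
    · filter_upwards with v
      have h1 : 0 ≤ M := le_trans (by positivity) (hgbdd n v)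
      rw [Real.norm_eq_abs, abs_of_nonneg (mul_nonneg (by positivity) (hS_nonneg v))]
      have : ‖g n v‖ ^ 2 ≤ M ^ 2 := by
        have := hgbdd n v
        nlinarith [norm_nonneg (g n v)]
      exact mul_le_mul_of_nonneg_right this (hS_nonneg v)
  have hQnonneg : ∀ n : ℕ, 0 ≤ krigQ k x (fun i : Fin n => xs i) (lam n) := by
    intro n
    rw [hσ n]
    exact integral_nonneg fun v => mul_nonneg (by positivity) (hS_nonneg v)
  have hσ0 : Tendsto (fun n : ℕ => krigQ k x (fun i : Fin n => xs i) (lam n)) atTop (nhds 0) :=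
    krig_var_tendsto_zero S hS_nonneg hS_int k hk xs x hx lam hlam hQnonneg
  -- integrability of φ
  have hφint : Integrable φ := by
    refine hφw.mono' hφc.aestronglyMeasurable ?_
    filter_upwards with v
    have h1 : (1:ℝ) ≤ 1 + ‖v‖ ^ r := le_add_of_nonneg_right (by positivity)
    calc ‖φ v‖ = ‖φ v‖ * 1 := (mul_one _).symm
      _ ≤ ‖φ v‖ * (1 + ‖v‖ ^ r) := by gcongr
  have hIφe : ∀ y : EuclideanSpace ℝ (Fin d),
      Integrable (fun v => φ v * Complex.exp ((⟪v, y⟫ : ℝ) * Complex.I)) := by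
    intro y
    refine hφint.norm.mono' ?_ ?_
    · exact (hφc.mul (hexpc y)).aestronglyMeasurable
    · filter_upwards with v
      rw [norm_mul, hnormexp, mul_one]
  -- difference identity
  have hdiff : ∀ n, (∑ i : Fin n, lam n i * f (xs i)) - f x = (∫ v, φ v * g n v).re := by
    intro n
    have hint : (∫ v, φ v * g n v)
        = (∑ i : Fin n, (lam n i : ℂ) *
            ∫ v, φ v * Complex.exp ((⟪v, xs i⟫ : ℝ) * Complex.I))
          - ∫ v, φ v * Complex.exp ((⟪v, x⟫ : ℝ) * Complex.I) := by
      have hptw : (fun v => φ v * g n v) = fun v =>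
          (∑ i : Fin n, (lam n i : ℂ) * (φ v * Complex.exp ((⟪v, xs i⟫ : ℝ) * Complex.I)))
            - φ v * Complex.exp ((⟪v, x⟫ : ℝ) * Complex.I) := by
        funext v
        rw [hgdef]
        simp only
        rw [mul_sub, Finset.mul_sum]
        congr 1
        exact Finset.sum_congr rfl fun i _ => by ring
      rw [hptw, integral_sub (integrable_finset_sum _ fun (i : Fin n) _ =>
          (hIφe (xs i)).const_mul ((lam n i : ℝ) : ℂ))
        (hIφe x), integral_finset_sum _ fun (i : Fin n) _ =>
          (hIφe (xs i)).const_mul ((lam n i : ℝ) : ℂ)]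
      congr 1
      exact Finset.sum_congr rfl fun i _ => integral_const_mul _ _
    rw [hint, Complex.sub_re, Complex.re_sum]
    congr 1
    · refine Finset.sum_congr rfl fun i _ => ?_
      rw [hφrep (xs i)]
      simp [Complex.mul_re]
    · exact hφrep x
  -- the weighted constant
  set A : ℝ := ∫ v, ‖φ v‖ ^ 2 * (1 + ‖v‖ ^ r) with hA
  have hA0 : 0 ≤ A := integral_nonneg fun v => by positivity
  have hIA : Integrable (fun v => ‖φ v‖ ^ 2 * (1 + ‖v‖ ^ r)) := by
    have hB0 : 0 ≤ B := le_trans (norm_nonneg _) (hB 0)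
    refine (hφw.const_mul B).mono' ?_ ?_
    · exact ((hφc.norm.pow 2)).aestronglyMeasurable.mul
        (continuous_const.add (continuous_norm.pow r)).aestronglyMeasurable
    · filter_upwards with v
      have h1 : (0:ℝ) ≤ 1 + ‖v‖ ^ r := by positivity
      rw [Real.norm_eq_abs, abs_of_nonneg (by positivity)]
      calc ‖φ v‖ ^ 2 * (1 + ‖v‖ ^ r) = ‖φ v‖ * ‖φ v‖ * (1 + ‖v‖ ^ r) := by ring
        _ ≤ B * ‖φ v‖ * (1 + ‖v‖ ^ r) := by gcongr; exact hB v
        _ = B * (‖φ v‖ * (1 + ‖v‖ ^ r)) := by ring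
  -- integrability of the product
  have hILHS : ∀ n, Integrable (fun v => ‖φ v‖ * ‖g n v‖) := by
    intro n
    set M : ℝ := (∑ i : Fin n, |lam n i|) + 1 with hM
    refine (hφint.norm.mul_const M).mono' ?_ ?_
    · exact hφc.norm.aestronglyMeasurable.mul (hgcont n).norm.aestronglyMeasurable
    · filter_upwards with v
      rw [Real.norm_eq_abs, abs_of_nonneg (mul_nonneg (norm_nonneg _) (norm_nonneg _))]
      exact mul_le_mul_of_nonneg_left (hgbdd n v) (norm_nonneg _)
  -- key integral inequality
  have hkey : ∀ t : ℝ, 0 < t → ∀ n,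
      (∫ v, ‖φ v‖ * ‖g n v‖)
        ≤ t * A + (1 / (4 * t * C)) * krigQ k x (fun i : Fin n => xs i) (lam n) := by
    intro t ht n
    have hIR : Integrable (fun v => t * (‖φ v‖ ^ 2 * (1 + ‖v‖ ^ r))
        + (1 / (4 * t * C)) * (‖g n v‖ ^ 2 * S v)) :=
      (hIA.const_mul t).add ((hIg2 n).const_mul _)
    have hptw : ∀ᵐ v : EuclideanSpace ℝ (Fin d),
        ‖φ v‖ * ‖g n v‖ ≤ t * (‖φ v‖ ^ 2 * (1 + ‖v‖ ^ r))
          + (1 / (4 * t * C)) * (‖g n v‖ ^ 2 * S v) := by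
      filter_upwards [hS_low] with v hv
      set w : ℝ := 1 + ‖v‖ ^ r with hw
      have hw0 : 0 < w := by positivity
      have htw : 0 < t * w := by positivity
      have h1 : ‖φ v‖ * ‖g n v‖ ≤ (t * w) * ‖φ v‖ ^ 2 + ‖g n v‖ ^ 2 / (4 * (t * w)) :=
        young_aux _ _ _ htw
      have h2 : ‖g n v‖ ^ 2 / (4 * (t * w)) ≤ (1 / (4 * t * C)) * (‖g n v‖ ^ 2 * S v) := by
        rw [div_le_iff₀ (by positivity)]
        have h3 : C ≤ S v * w := hv
        have h4 : 0 ≤ ‖g n v‖ ^ 2 := by positivity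
        have h5 : (1 / (4 * t * C)) * (‖g n v‖ ^ 2 * S v) * (4 * (t * w))
            = (‖g n v‖ ^ 2 * (S v * w)) / C := by
          field_simp
        rw [h5, le_div_iff₀ hC]
        nlinarith [mul_le_mul_of_nonneg_left h3 h4]
      calc ‖φ v‖ * ‖g n v‖ ≤ (t * w) * ‖φ v‖ ^ 2 + ‖g n v‖ ^ 2 / (4 * (t * w)) := h1
        _ ≤ t * (‖φ v‖ ^ 2 * w) + (1 / (4 * t * C)) * (‖g n v‖ ^ 2 * S v) := by
            refine add_le_add (le_of_eq (by ring)) h2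
    calc (∫ v, ‖φ v‖ * ‖g n v‖)
        ≤ ∫ v, (t * (‖φ v‖ ^ 2 * (1 + ‖v‖ ^ r))
            + (1 / (4 * t * C)) * (‖g n v‖ ^ 2 * S v)) :=
          integral_mono_ae (hILHS n) hIR hptw
      _ = t * A + (1 / (4 * t * C)) * krigQ k x (fun i : Fin n => xs i) (lam n) := by
          rw [integral_add (hIA.const_mul t) ((hIg2 n).const_mul _),
            integral_const_mul, integral_const_mul, hσ n, hA]
  -- conclusion
  have hmain : Tendsto (fun n : ℕ => (∑ i : Fin n, lam n i * f (xs i)) - f x) atTop (nhds 0) := by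
    rw [NormedAddCommGroup.tendsto_nhds_zero]
    intro ε hε
    set t : ℝ := ε / (4 * (A + 1)) with htdef
    have ht : 0 < t := by positivity
    have h1 : t * A < ε / 2 := by
      have : t * A < t * (A + 1) := by nlinarith
      have h2 : t * (A + 1) = ε / 4 := by
        rw [htdef]; field_simp
      linarith [hε]
    have h2 : ∀ᶠ n in atTop, (1 / (4 * t * C)) * krigQ k x (fun i : Fin n => xs i) (lam n)
        ≤ ε / 2 := by
      have hpos : 0 < 2 * t * C * ε := by positivity
      have hev : ∀ᶠ n in atTop,
          krigQ k x (fun i : Fin n => xs i) (lam n) < 2 * t * C * ε := by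
        have := hσ0
        rw [Metric.tendsto_atTop] at this
        obtain ⟨N, hN⟩ := this _ hpos
        refine eventually_atTop.2 ⟨N, fun n hn => ?_⟩
        have := hN n hn
        rw [Real.dist_eq, sub_zero, abs_of_nonneg (hQnonneg n)] at this
        exact this
      filter_upwards [hev] with n hn
      calc (1 / (4 * t * C)) * krigQ k x (fun i : Fin n => xs i) (lam n)
          ≤ (1 / (4 * t * C)) * (2 * t * C * ε) := by
            refine mul_le_mul_of_nonneg_left (le_of_lt hn) (by positivity)
        _ = ε / 2 := by field_simp; ring
        _ ≤ ε / 2 := le_rfl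
      
    filter_upwards [h2] with n hn
    rw [Real.norm_eq_abs, hdiff n]
    calc |(∫ v, φ v * g n v).re| ≤ ‖∫ v, φ v * g n v‖ := Complex.abs_re_le_norm _
      _ ≤ ∫ v, ‖φ v * g n v‖ := norm_integral_le_integral_norm _
      _ = ∫ v, ‖φ v‖ * ‖g n v‖ := by congr 1; funext v; rw [norm_mul]
      _ ≤ t * A + (1 / (4 * t * C)) * krigQ k x (fun i : Fin n => xs i) (lam n) := hkey t ht n
      _ < ε / 2 + ε / 2 := by exact add_lt_add_of_lt_of_le h1 hn
      _ = ε := by ring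
  have := hmain.add (tendsto_const_nhds (x := f x))
  simpa using this
end

section
/- Fix s, α > 0 and let k(x,y) = s² exp(−α‖x−y‖²) on ℝ^d. Then there exist a sequence (x_n)_{n≥1} in ℝ^d and a point x ∈ ℝ^d such that x does NOT belong to the closure of {x_n : n ≥ 1}, yet the kriging variance σ²(x; x₁,…,x_n) converges to 0 as n → ∞. (That is, a process with Gaussian covariance does not possess the No-Empty-Ball property.) -/
open Filter

open Filter Finset Polynomial

section Aux

noncomputable def gaux (α : ℝ) (t : ℕ) (a : ℝ) : ℝ :=
  Real.sqrt ((2*α)^t / t.factorial) * (Real.exp (-(α*a^2)) * a^t)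

lemma gaux_mul {α : ℝ} (hα : 0 ≤ α) (t : ℕ) (a b : ℝ) :
    gaux α t a * gaux α t b
      = ((2*(a*b)*α)^t / t.factorial) * (Real.exp (-(α*a^2)) * Real.exp (-(α*b^2))) := by
  unfold gaux
  have h0 : (0:ℝ) ≤ (2*α)^t / t.factorial := by positivity
  have : Real.sqrt ((2*α)^t / t.factorial) * Real.sqrt ((2*α)^t / t.factorial)
      = (2*α)^t / t.factorial := Real.mul_self_sqrt h0
  calc Real.sqrt ((2*α)^t / t.factorial) * (Real.exp (-(α*a^2)) * a^t) *
        (Real.sqrt ((2*α)^t / t.factorial) * (Real.exp (-(α*b^2)) * b^t))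
      = (Real.sqrt ((2*α)^t / t.factorial) * Real.sqrt ((2*α)^t / t.factorial)) *
        (Real.exp (-(α*a^2)) * Real.exp (-(α*b^2))) * (a^t * b^t) := by ring
    _ = ((2*α)^t / t.factorial) * (Real.exp (-(α*a^2)) * Real.exp (-(α*b^2))) * (a*b)^t := by
        rw [this, mul_pow a b]
    _ = ((2*(a*b)*α)^t / t.factorial) * (Real.exp (-(α*a^2)) * Real.exp (-(α*b^2))) := by
        rw [mul_pow, mul_pow]; ring

lemma summable_gaux_mul {α : ℝ} (hα : 0 ≤ α) (a b : ℝ) :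
    Summable (fun t => gaux α t a * gaux α t b) := by
  have := (Real.summable_pow_div_factorial (2*(a*b)*α)).mul_right
    (Real.exp (-(α*a^2)) * Real.exp (-(α*b^2)))
  exact this.congr (fun t => (gaux_mul hα t a b).symm)

lemma tsum_exp_div (x : ℝ) : ∑' t : ℕ, x^t / t.factorial = Real.exp x := by
  rw [Real.exp_eq_exp_ℝ, NormedSpace.exp_eq_tsum_div]

lemma tsum_gaux_mul {α : ℝ} (hα : 0 ≤ α) (a b : ℝ) :
    ∑' t, gaux α t a * gaux α t b = Real.exp (-(α*(a-b)^2)) := by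
  calc ∑' t, gaux α t a * gaux α t b
      = ∑' t, ((2*(a*b)*α)^t / t.factorial) * (Real.exp (-(α*a^2)) * Real.exp (-(α*b^2))) := by
        exact tsum_congr (fun t => gaux_mul hα t a b)
    _ = (∑' t : ℕ, (2*(a*b)*α)^t / t.factorial) * (Real.exp (-(α*a^2)) * Real.exp (-(α*b^2))) :=
        tsum_mul_right
    _ = Real.exp (2*(a*b)*α) * (Real.exp (-(α*a^2)) * Real.exp (-(α*b^2))) := by
        rw [tsum_exp_div]
    _ = Real.exp (-(α*(a-b)^2)) := by
        rw [← Real.exp_add, ← Real.exp_add]; ring_nf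

lemma hasSum_gaux_mul {α : ℝ} (hα : 0 ≤ α) (a b : ℝ) :
    HasSum (fun t => gaux α t a * gaux α t b) (Real.exp (-(α*(a-b)^2))) := by
  rw [← tsum_gaux_mul hα a b]
  exact (summable_gaux_mul hα a b).hasSum

lemma hasSum_scalarQ {α : ℝ} (hα : 0 ≤ α) {n : ℕ} (u : ℝ) (v : Fin n → ℝ) (lam : Fin n → ℝ) :
    HasSum (fun t => (gaux α t u - ∑ i, lam i * gaux α t (v i))^2)
      (1 - 2 * ∑ i, lam i * Real.exp (-(α*(u - v i)^2))
        + ∑ i, ∑ j, lam i * lam j * Real.exp (-(α*(v i - v j)^2))) := by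
  have hA := hasSum_gaux_mul hα u u
  have hB : HasSum (fun t => ∑ i, lam i * (gaux α t u * gaux α t (v i)))
      (∑ i, lam i * Real.exp (-(α*(u - v i)^2))) :=
    hasSum_sum (fun i _ => (hasSum_gaux_mul hα u (v i)).mul_left (lam i))
  have hC : HasSum (fun t => ∑ i, ∑ j, lam i * lam j * (gaux α t (v i) * gaux α t (v j)))
      (∑ i, ∑ j, lam i * lam j * Real.exp (-(α*(v i - v j)^2))) :=
    hasSum_sum (fun i _ => hasSum_sum (fun j _ =>
      (hasSum_gaux_mul hα (v i) (v j)).mul_left (lam i * lam j)))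
  have key := (hA.sub (hB.mul_left 2)).add hC
  have hone : Real.exp (-(α*(u-u)^2)) = 1 := by simp
  rw [hone] at key
  have hpt : (fun t => (gaux α t u - ∑ i, lam i * gaux α t (v i))^2)
      = (fun t => (gaux α t u * gaux α t u
          - 2 * ∑ i, lam i * (gaux α t u * gaux α t (v i)))
          + ∑ i, ∑ j, lam i * lam j * (gaux α t (v i) * gaux α t (v j))) := by
    funext t
    have h1 : ∑ i, lam i * (gaux α t u * gaux α t (v i))
        = gaux α t u * ∑ i, lam i * gaux α t (v i) := by
      rw [Finset.mul_sum]; exact Finset.sum_congr rfl (fun i _ => by ring)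
    have h2 : ∑ i, ∑ j, lam i * lam j * (gaux α t (v i) * gaux α t (v j))
        = (∑ i, lam i * gaux α t (v i)) * (∑ j, lam j * gaux α t (v j)) := by
      rw [Finset.sum_mul_sum]
      exact Finset.sum_congr rfl (fun i _ => Finset.sum_congr rfl (fun j _ => by ring))
    rw [h1, h2]; ring
  rw [hpt]
  exact key

lemma prod_range_sub_self (j : ℕ) : ∏ i ∈ Finset.range j, (j - i) = j.factorial := by
  calc ∏ i ∈ Finset.range j, (j - i)
      = ∏ i ∈ Finset.range j, (j - 1 - i + 1) :=
        Finset.prod_congr rfl (fun i hi => by rw [Finset.mem_range] at hi; omega)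
    _ = ∏ i ∈ Finset.range j, (i + 1) := Finset.prod_range_reflect (fun i => i + 1) j
    _ = j.factorial := Finset.prod_range_add_one_eq_factorial j

lemma prod_Ico_sub_self (j m : ℕ) : ∏ i ∈ Finset.Ico (j+1) (m+1), (i - j) = (m - j).factorial := by
  rw [Finset.prod_Ico_eq_prod_range]
  have h : m + 1 - (j + 1) = m - j := by omega
  rw [h]
  calc ∏ i ∈ Finset.range (m - j), (j + 1 + i - j)
      = ∏ i ∈ Finset.range (m - j), (i + 1) :=
        Finset.prod_congr rfl (fun i _ => by omega)
    _ = (m - j).factorial := Finset.prod_range_add_one_eq_factorial _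

lemma erase_range_eq (m j : ℕ) (hj : j ≤ m) :
    (Finset.range (m+1)).erase j = Finset.range j ∪ Finset.Ico (j+1) (m+1) := by
  ext i
  simp only [Finset.mem_erase, Finset.mem_range, Finset.mem_union, Finset.mem_Ico]
  omega

lemma prod_abs_sub_eq (m j : ℕ) (hj : j ≤ m) :
    ∏ i ∈ (Finset.range (m+1)).erase j, |(j:ℝ) - (i:ℝ)|
      = (j.factorial * (m-j).factorial : ℕ) := by
  rw [erase_range_eq m j hj, Finset.prod_union]
  · have h1 : ∏ i ∈ Finset.range j, |(j:ℝ) - (i:ℝ)| = (j.factorial : ℕ) := by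
      calc ∏ i ∈ Finset.range j, |(j:ℝ) - (i:ℝ)|
          = ∏ i ∈ Finset.range j, ((j - i : ℕ) : ℝ) := by
            refine Finset.prod_congr rfl (fun i hi => ?_)
            rw [Finset.mem_range] at hi
            rw [Nat.cast_sub hi.le, abs_of_nonneg]
            have : (i:ℝ) ≤ j := Nat.cast_le.2 hi.le
            linarith
        _ = ((∏ i ∈ Finset.range j, (j - i) : ℕ) : ℝ) := by rw [Nat.cast_prod]
        _ = (j.factorial : ℕ) := by rw [prod_range_sub_self]
    have h2 : ∏ i ∈ Finset.Ico (j+1) (m+1), |(j:ℝ) - (i:ℝ)| = ((m-j).factorial : ℕ) := by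
      calc ∏ i ∈ Finset.Ico (j+1) (m+1), |(j:ℝ) - (i:ℝ)|
          = ∏ i ∈ Finset.Ico (j+1) (m+1), ((i - j : ℕ) : ℝ) := by
            refine Finset.prod_congr rfl (fun i hi => ?_)
            rw [Finset.mem_Ico] at hi
            have hij : j ≤ i := by omega
            rw [Nat.cast_sub hij, abs_sub_comm, abs_of_nonneg]
            have : (j:ℝ) ≤ i := Nat.cast_le.2 hij
            linarith
        _ = ((∏ i ∈ Finset.Ico (j+1) (m+1), (i - j) : ℕ) : ℝ) := by rw [Nat.cast_prod]
        _ = ((m-j).factorial : ℕ) := by rw [prod_Ico_sub_self]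
    rw [h1, h2]
    push_cast
    ring
  · rw [Finset.disjoint_left]
    intro i h1 h2
    rw [Finset.mem_range] at h1
    rw [Finset.mem_Ico] at h2
    omega

lemma pow_self_le_exp_mul_factorial : ∀ m : ℕ, (m:ℝ)^m ≤ Real.exp 1 ^ m * m.factorial := by
  intro m
  induction m with
  | zero => simp
  | succ m ih =>
    rcases Nat.eq_zero_or_pos m with hm | hm
    · subst hm
      norm_num
    · have hm1 : (1:ℝ) ≤ (m:ℝ) := by exact_mod_cast hm
      have hmpos : (0:ℝ) < m := by linarith
      have hstep : ((m:ℝ) + 1)^m ≤ Real.exp 1 * (m:ℝ)^m := by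
        have h1 : (m:ℝ) + 1 = (m:ℝ) * (1 + 1/m) := by field_simp
        have h2 : (1 + 1/(m:ℝ)) ≤ Real.exp (1/m) := by
          have := Real.add_one_le_exp (1/(m:ℝ))
          linarith
        have h3 : (1 + 1/(m:ℝ))^m ≤ Real.exp (1/m) ^ m := by
          apply pow_le_pow_left₀ (by positivity) h2
        have h4 : Real.exp (1/(m:ℝ)) ^ m = Real.exp 1 := by
          rw [← Real.exp_nat_mul]
          congr 1
          field_simp
        calc ((m:ℝ) + 1)^m = (m:ℝ)^m * (1 + 1/m)^m := by rw [h1, mul_pow]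
          _ ≤ (m:ℝ)^m * Real.exp 1 := by
              apply mul_le_mul_of_nonneg_left _ (by positivity)
              rw [← h4]; exact h3
          _ = Real.exp 1 * (m:ℝ)^m := by ring
      have hexp : (0:ℝ) < Real.exp 1 := Real.exp_pos 1
      calc ((m+1 : ℕ):ℝ)^(m+1) = ((m:ℝ)+1)^m * ((m:ℝ)+1) := by push_cast; ring
        _ ≤ (Real.exp 1 * (m:ℝ)^m) * ((m:ℝ)+1) := by
            apply mul_le_mul_of_nonneg_right hstep (by positivity)
        _ ≤ (Real.exp 1 * (Real.exp 1 ^ m * m.factorial)) * ((m:ℝ)+1) := by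
            apply mul_le_mul_of_nonneg_right _ (by positivity)
            exact mul_le_mul_of_nonneg_left ih (le_of_lt hexp)
        _ = Real.exp 1 ^ (m+1) * ((m+1).factorial : ℕ) := by
            push_cast [Nat.factorial_succ]
            ring

lemma vinj (m : ℕ) (hm : 0 < m) :
    Set.InjOn (fun i : ℕ => (i:ℝ)/m) (Finset.range (m+1)) := by
  intro i _ j _ h
  simp only at h
  have hm' : (m:ℝ) ≠ 0 := by positivity
  field_simp at h
  exact_mod_cast h

lemma lagrange_sum_pow (m t : ℕ) (hm : 0 < m) (ht : t ≤ m) :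
    ∑ j ∈ Finset.range (m+1),
      ((j:ℝ)/m)^t *
        Polynomial.eval (3:ℝ) (Lagrange.basis (Finset.range (m+1)) (fun i : ℕ => (i:ℝ)/m) j)
      = 3^t := by
  have hinj := vinj m hm
  have hdeg : (Polynomial.X ^ t : Polynomial ℝ).degree < (Finset.range (m+1)).card := by
    rw [Finset.card_range, Polynomial.degree_X_pow]
    exact_mod_cast Nat.lt_succ_of_le ht
  have key := congrArg (Polynomial.eval (3:ℝ)) (Lagrange.eq_interpolate hinj hdeg)
  simp only [Lagrange.interpolate_apply, Polynomial.eval_finset_sum, Polynomial.eval_mul,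
    Polynomial.eval_C, Polynomial.eval_pow, Polynomial.eval_X] at key
  rw [← key]

lemma lagrange_basis_bound (m j : ℕ) (hm : 0 < m) (hj : j ≤ m) :
    |Polynomial.eval (3:ℝ) (Lagrange.basis (Finset.range (m+1)) (fun i : ℕ => (i:ℝ)/m) j)|
      ≤ (6 * Real.exp 1)^m := by
  have hjm : j ∈ Finset.range (m+1) := Finset.mem_range.2 (Nat.lt_succ_of_le hj)
  have hcard : ((Finset.range (m+1)).erase j).card = m := by
    simp [Finset.card_erase_of_mem hjm]
  have hmR : (0:ℝ) < m := by exact_mod_cast hm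
  set F : ℝ := ((j.factorial * (m-j).factorial : ℕ) : ℝ) with hFdef
  have hF : (0:ℝ) < F := by
    rw [hFdef]
    exact_mod_cast Nat.mul_pos (Nat.factorial_pos j) (Nat.factorial_pos (m-j))
  have step1 : |Polynomial.eval (3:ℝ)
      (Lagrange.basis (Finset.range (m+1)) (fun i : ℕ => (i:ℝ)/m) j)|
      ≤ (∏ i ∈ (Finset.range (m+1)).erase j, |(j:ℝ)/m - (i:ℝ)/m|)⁻¹ * 3^m := by
    rw [Lagrange.basis, Polynomial.eval_prod, Finset.abs_prod]
    have heval : ∀ i ∈ (Finset.range (m+1)).erase j,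
        |Polynomial.eval (3:ℝ) (Lagrange.basisDivisor ((j:ℝ)/m) ((i:ℝ)/m))|
          = |(j:ℝ)/m - (i:ℝ)/m|⁻¹ * |3 - (i:ℝ)/m| := by
      intro i _
      simp only [Lagrange.basisDivisor, Polynomial.eval_mul, Polynomial.eval_C,
        Polynomial.eval_sub, Polynomial.eval_X]
      rw [abs_mul, abs_inv]
    rw [Finset.prod_congr rfl heval]
    calc ∏ i ∈ (Finset.range (m+1)).erase j, |(j:ℝ)/m - (i:ℝ)/m|⁻¹ * |3 - (i:ℝ)/m|
        ≤ ∏ i ∈ (Finset.range (m+1)).erase j, |(j:ℝ)/m - (i:ℝ)/m|⁻¹ * 3 := by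
          refine Finset.prod_le_prod (fun i _ => by positivity) (fun i hi => ?_)
          refine mul_le_mul_of_nonneg_left ?_ (by positivity)
          rw [Finset.mem_erase, Finset.mem_range] at hi
          have hi1 : (0:ℝ) ≤ (i:ℝ)/m := by positivity
          have hi2 : (i:ℝ)/m ≤ 1 := by
            rw [div_le_one hmR]
            exact_mod_cast Nat.lt_succ_iff.1 hi.2
          rw [abs_of_nonneg (by linarith)]
          linarith
      _ = (∏ i ∈ (Finset.range (m+1)).erase j, |(j:ℝ)/m - (i:ℝ)/m|)⁻¹ * 3^m := by
          rw [Finset.prod_mul_distrib, Finset.prod_const, hcard, ← Finset.prod_inv_distrib]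
  have step2 : ∏ i ∈ (Finset.range (m+1)).erase j, |(j:ℝ)/m - (i:ℝ)/m| = F / (m:ℝ)^m := by
    calc ∏ i ∈ (Finset.range (m+1)).erase j, |(j:ℝ)/m - (i:ℝ)/m|
        = ∏ i ∈ (Finset.range (m+1)).erase j, (|(j:ℝ) - (i:ℝ)| / m) := by
          refine Finset.prod_congr rfl (fun i _ => ?_)
          rw [div_sub_div_same, abs_div, abs_of_nonneg hmR.le]
      _ = (∏ i ∈ (Finset.range (m+1)).erase j, |(j:ℝ) - (i:ℝ)|) / (m:ℝ)^m := by
          rw [Finset.prod_div_distrib, Finset.prod_const, hcard]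
      _ = F / (m:ℝ)^m := by rw [prod_abs_sub_eq m j hj]
  rw [step2] at step1
  have hfacN : m.factorial ≤ 2^m * (j.factorial * (m-j).factorial) := by
    have hC : m.choose j ≤ 2^m := by
      have h1 : m.choose j ≤ ∑ i ∈ Finset.range (m+1), m.choose i :=
        Finset.single_le_sum (f := fun i => m.choose i) (fun i _ => Nat.zero_le _) hjm
      rwa [Nat.sum_range_choose] at h1
    calc m.factorial = m.choose j * j.factorial * (m-j).factorial :=
          (Nat.choose_mul_factorial_mul_factorial hj).symm
      _ ≤ 2^m * j.factorial * (m-j).factorial :=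
          Nat.mul_le_mul_right _ (Nat.mul_le_mul_right _ hC)
      _ = 2^m * (j.factorial * (m-j).factorial) := by ring
  have hfac : (m.factorial : ℝ) ≤ 2^m * F := by
    rw [hFdef]
    exact_mod_cast hfacN
  have hmm := pow_self_le_exp_mul_factorial m
  have h5 : (m:ℝ)^m ≤ (Real.exp 1^m * 2^m) * F := by
    calc (m:ℝ)^m ≤ Real.exp 1^m * m.factorial := hmm
      _ ≤ Real.exp 1^m * (2^m * F) :=
          mul_le_mul_of_nonneg_left hfac (by positivity)
      _ = (Real.exp 1^m * 2^m) * F := by ring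
  calc |Polynomial.eval (3:ℝ) (Lagrange.basis (Finset.range (m+1)) (fun i : ℕ => (i:ℝ)/m) j)|
      ≤ (F / (m:ℝ)^m)⁻¹ * 3^m := step1
    _ = ((m:ℝ)^m / F) * 3^m := by rw [inv_div]
    _ ≤ ((Real.exp 1^m * 2^m)) * 3^m := by
        refine mul_le_mul_of_nonneg_right ?_ (by positivity)
        rw [div_le_iff₀ hF]
        exact h5
    _ = (6 * Real.exp 1)^m := by
        rw [← mul_pow, ← mul_pow]
        ring_nf

lemma summable_shift (y : ℝ) (N : ℕ) :
    Summable (fun t : ℕ => y^(t+N)/(t+N).factorial) :=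
  (summable_nat_add_iff N).2 (Real.summable_pow_div_factorial y)

lemma tail_bound (y : ℝ) (hy : 0 ≤ y) (N : ℕ) :
    ∑' t : ℕ, y^(t+N)/(t+N).factorial ≤ Real.exp y * (y^N/N.factorial) := by
  have hterm : ∀ t : ℕ, y^(t+N)/((t+N).factorial : ℝ)
      ≤ (y^N/N.factorial) * (y^t/t.factorial) := by
    intro t
    have hdvd : N.factorial * t.factorial ∣ (t+N).factorial := by
      rw [add_comm]
      exact Nat.factorial_mul_factorial_dvd_factorial_add N t
    have hle : (N.factorial * t.factorial : ℝ) ≤ ((t+N).factorial : ℝ) := by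
      exact_mod_cast Nat.le_of_dvd (Nat.factorial_pos _) hdvd
    have hpos : (0:ℝ) < (N.factorial * t.factorial : ℝ) := by
      exact_mod_cast Nat.mul_pos (Nat.factorial_pos N) (Nat.factorial_pos t)
    calc y^(t+N)/((t+N).factorial : ℝ)
        ≤ y^(t+N)/(N.factorial * t.factorial : ℝ) :=
          div_le_div_of_nonneg_left (by positivity) hpos hle
      _ = (y^N/N.factorial) * (y^t/t.factorial) := by
          rw [pow_add, div_mul_div_comm]
          ring
  calc ∑' t : ℕ, y^(t+N)/(t+N).factorial
      ≤ ∑' t : ℕ, (y^N/N.factorial) * (y^t/t.factorial) :=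
        Summable.tsum_le_tsum hterm (summable_shift y N)
          ((Real.summable_pow_div_factorial y).mul_left _)
    _ = (y^N/N.factorial) * ∑' t : ℕ, y^t/t.factorial := tsum_mul_left
    _ = Real.exp y * (y^N/N.factorial) := by
        rw [Real.exp_eq_exp_ℝ, NormedSpace.exp_eq_tsum_div]
        ring

lemma krig_sum_collapse {n m : ℕ} (hn : ∀ j, j ≤ m → Nat.pair m j < n)
    (μ : ℕ → ℝ) (G : ℕ → ℝ) :
    ∑ i : Fin n, (∑ j ∈ Finset.range (m+1), if (i:ℕ) = Nat.pair m j then μ j else 0) * G i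
      = ∑ j ∈ Finset.range (m+1), μ j * G (Nat.pair m j) := by
  have h1 : ∀ i : Fin n,
      (∑ j ∈ Finset.range (m+1), if (i:ℕ) = Nat.pair m j then μ j else 0) * G (i:ℕ)
      = ∑ j ∈ Finset.range (m+1), (if (i:ℕ) = Nat.pair m j then μ j * G (i:ℕ) else 0) := by
    intro i
    rw [Finset.sum_mul]
    exact Finset.sum_congr rfl (fun j _ => by split <;> simp
      )
  simp only [h1]
  rw [Finset.sum_comm]
  refine Finset.sum_congr rfl (fun j hj => ?_)
  rw [Finset.mem_range] at hj
  have hlt : Nat.pair m j < n := hn j (Nat.lt_succ_iff.1 hj)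
  have : ∀ i : Fin n, ((i:ℕ) = Nat.pair m j) ↔ (i = (⟨Nat.pair m j, hlt⟩ : Fin n)) := by
    intro i; constructor
    · intro h; exact Fin.ext h
    · intro h; rw [h]
  calc ∑ i : Fin n, (if (i:ℕ) = Nat.pair m j then μ j * G (i:ℕ) else 0)
      = ∑ i : Fin n, (if i = (⟨Nat.pair m j, hlt⟩ : Fin n) then μ j * G (i:ℕ) else 0) := by
        refine Finset.sum_congr rfl (fun i _ => ?_)
        simp only [this i]
    _ = μ j * G (Nat.pair m j) := by
        rw [Finset.sum_ite_eq' Finset.univ (⟨Nat.pair m j, hlt⟩ : Fin n)]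
        simp

lemma tendstoD (s α : ℝ) (hα : 0 < α) :
    Tendsto (fun m : ℕ => s^2 * (2*(Real.exp (18*α)*((18*α)^(m+1)/(m+1).factorial))
      + 2*(((m:ℝ)+1)*(6*Real.exp 1)^m)^2*(Real.exp (2*α)*((2*α)^(m+1)/(m+1).factorial))))
      atTop (nhds 0) := by
  have hmain : ∀ (c : ℝ), 0 ≤ c → Tendsto (fun m : ℕ => c^m / m.factorial) atTop (nhds 0) :=
    fun c _ => FloorSemiring.tendsto_pow_div_factorial_atTop c
  have h1 : Tendsto (fun m : ℕ => 2*(Real.exp (18*α)*((18*α)^(m+1)/(m+1).factorial)))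
      atTop (nhds 0) := by
    have hb : Tendsto (fun m : ℕ => (2*Real.exp (18*α)*(18*α)) * ((18*α)^m/m.factorial))
        atTop (nhds 0) := by
      simpa using (hmain (18*α) (by positivity)).const_mul (2*Real.exp (18*α)*(18*α))
    apply squeeze_zero (fun m => by positivity) _ hb
    intro m
    have hfact : (m.factorial : ℝ) ≤ ((m+1).factorial : ℝ) := by
      exact_mod_cast Nat.factorial_le (Nat.le_succ m)
    have hf1 : (18*α)^(m+1)/((m+1).factorial : ℝ) ≤ (18*α)*((18*α)^m/m.factorial) := by
      rw [pow_succ]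
      rw [div_le_iff₀ (by positivity)]
      have hmf : (0:ℝ) < (m.factorial:ℝ) := by exact_mod_cast m.factorial_pos
      calc (18*α)^m * (18*α) = ((18*α)^m/m.factorial) * (18*α) * m.factorial := by
            field_simp
        _ ≤ ((18*α)^m/m.factorial) * (18*α) * (m+1).factorial := by
            refine mul_le_mul_of_nonneg_left hfact (by positivity)
        _ = 18*α*((18*α)^m/↑m.factorial) * ↑(m+1).factorial := by ring
    calc 2*(Real.exp (18*α)*((18*α)^(m+1)/(m+1).factorial))
        ≤ 2*(Real.exp (18*α)*((18*α)*((18*α)^m/m.factorial))) := by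
          refine mul_le_mul_of_nonneg_left (mul_le_mul_of_nonneg_left hf1 (by positivity)) (by norm_num)
      _ = (2*Real.exp (18*α)*(18*α)) * ((18*α)^m/m.factorial) := by ring
  have h2 : Tendsto (fun m : ℕ =>
      2*(((m:ℝ)+1)*(6*Real.exp 1)^m)^2*(Real.exp (2*α)*((2*α)^(m+1)/(m+1).factorial)))
      atTop (nhds 0) := by
    set C : ℝ := (288 * Real.exp 1^2 * α) with hC
    have hCpos : 0 ≤ C := by positivity
    have hb : Tendsto (fun m : ℕ => (16*α*Real.exp (2*α)) * (C^m/m.factorial))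
        atTop (nhds 0) := by
      simpa using (hmain C hCpos).const_mul (16*α*Real.exp (2*α))
    apply squeeze_zero (fun m => by positivity) _ hb
    intro m
    have hm1 : ((m:ℝ)+1) ≤ 2*2^m := by
      have h := Nat.lt_two_pow_self (n := m+1)
      have : ((m:ℝ)+1) ≤ (2:ℝ)^(m+1) := by exact_mod_cast h.le
      calc ((m:ℝ)+1) ≤ (2:ℝ)^(m+1) := this
        _ = 2*2^m := by rw [pow_succ]; ring
    have hfact : (m.factorial : ℝ) ≤ ((m+1).factorial : ℝ) := by
      exact_mod_cast Nat.factorial_le (Nat.le_succ m)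
    have hf1 : (2*α)^(m+1)/((m+1).factorial : ℝ) ≤ (2*α)*((2*α)^m/m.factorial) := by
      rw [pow_succ, div_le_iff₀ (by positivity)]
      have hmf : (0:ℝ) < (m.factorial:ℝ) := by exact_mod_cast m.factorial_pos
      calc (2*α)^m * (2*α) = ((2*α)^m/m.factorial) * (2*α) * m.factorial := by field_simp
        _ ≤ ((2*α)^m/m.factorial) * (2*α) * (m+1).factorial := by
            refine mul_le_mul_of_nonneg_left hfact (by positivity)
        _ = 2*α*((2*α)^m/↑m.factorial) * ↑(m+1).factorial := by ring
    calc 2*(((m:ℝ)+1)*(6*Real.exp 1)^m)^2*(Real.exp (2*α)*((2*α)^(m+1)/(m+1).factorial))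
        ≤ 2*((2*2^m)*(6*Real.exp 1)^m)^2*(Real.exp (2*α)*((2*α)*((2*α)^m/m.factorial))) := by
          refine mul_le_mul ?_ ?_ (by positivity) (by positivity)
          · refine mul_le_mul_of_nonneg_left (pow_le_pow_left₀ (by positivity) ?_ 2) (by norm_num)
            exact mul_le_mul_of_nonneg_right hm1 (by positivity)
          · exact mul_le_mul_of_nonneg_left hf1 (by positivity)
      _ = (16*α*Real.exp (2*α)) * (C^m/m.factorial) := by
          rw [hC]
          have h288 : (288:ℝ)^m = 2^(3*m) * 6^(2*m) := by
            calc (288:ℝ)^m = ((2^3*6^2 : ℝ))^m := by norm_num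
              _ = ((2:ℝ)^3)^m * ((6:ℝ)^2)^m := mul_pow _ _ _
              _ = 2^(3*m) * 6^(2*m) := by rw [← pow_mul, ← pow_mul]
          simp only [div_eq_mul_inv, mul_pow, h288]
          ring
    -- end
  have := (h1.add h2).const_mul (s^2)
  simpa [mul_add] using this

end Aux

set_option maxHeartbeats 1600000 in
/-- A process with Gaussian covariance `k(x,y) = s² exp(−α‖x−y‖²)` does not have the
No-Empty-Ball property: there are a sequence `(xₙ)` and a point `x` not adherent to
`{xₙ : n ≥ 1}` such that the kriging variance at `x` tends to `0`. -/
theorem gaussian_kernel_not_NEB {d : ℕ} (hd : 0 < d)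
    (s α : ℝ) (hs : 0 < s) (hα : 0 < α)
    (k : EuclideanSpace ℝ (Fin d) → EuclideanSpace ℝ (Fin d) → ℝ)
    (hk : ∀ x y, k x y = s ^ 2 * Real.exp (-α * ‖x - y‖ ^ 2)) :
    ∃ (xs : ℕ → EuclideanSpace ℝ (Fin d)) (x : EuclideanSpace ℝ (Fin d)),
      x ∉ closure (Set.range xs) ∧
      Tendsto (fun n : ℕ => krigVar k x (fun i : Fin n => xs i)) atTop (nhds 0) := by
  classical
  set e₀ : EuclideanSpace ℝ (Fin d) := EuclideanSpace.single ⟨0, hd⟩ (1:ℝ) with he₀def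
  have he₀ : ‖e₀‖ = 1 := by
    rw [he₀def, EuclideanSpace.norm_single, norm_one]
  set q : ℕ → ℝ := fun i => ((min i.unpair.2 i.unpair.1 : ℕ):ℝ) / ((max 1 i.unpair.1 : ℕ):ℝ)
    with hqdef
  have hq0 : ∀ i, 0 ≤ q i := by
    intro i; rw [hqdef]; positivity
  have hq1 : ∀ i, q i ≤ 1 := by
    intro i
    rw [hqdef]
    have hden : (0:ℝ) < ((max 1 i.unpair.1 : ℕ):ℝ) := by
      have : 1 ≤ max 1 i.unpair.1 := le_max_left _ _
      exact_mod_cast lt_of_lt_of_le Nat.zero_lt_one this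
    rw [div_le_one hden]
    have : min i.unpair.2 i.unpair.1 ≤ max 1 i.unpair.1 :=
      le_trans (min_le_right _ _) (le_max_right _ _)
    exact_mod_cast this
  have hqp : ∀ m j : ℕ, 1 ≤ m → j ≤ m → q (Nat.pair m j) = (j:ℝ)/(m:ℝ) := by
    intro m j hm hj
    rw [hqdef]
    simp only [Nat.unpair_pair]
    rw [min_eq_left hj, max_eq_right hm]
  refine ⟨fun i => q i • e₀, (3:ℝ) • e₀, ?_, ?_⟩
  · -- not in closure
    intro hmem
    rw [Metric.mem_closure_iff] at hmem
    obtain ⟨y, hy, hdist⟩ := hmem 2 (by norm_num)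
    obtain ⟨i, rfl⟩ := hy
    have hde : dist ((3:ℝ) • e₀) (q i • e₀) = |3 - q i| := by
      rw [dist_eq_norm, ← sub_smul, norm_smul, he₀, mul_one, Real.norm_eq_abs]
    rw [hde, abs_of_nonneg (by linarith [hq1 i])] at hdist
    linarith [hq1 i]
  · -- tendsto
    have hk' : ∀ a b : ℝ, k (a • e₀) (b • e₀) = s^2 * Real.exp (-(α*(a-b)^2)) := by
      intro a b
      rw [hk]
      congr 1
      rw [← sub_smul, norm_smul, he₀, mul_one, Real.norm_eq_abs, sq_abs]
      ring
    have hbridge : ∀ (n : ℕ) (lam : Fin n → ℝ),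
        krigQ k ((3:ℝ) • e₀) (fun i : Fin n => q (i:ℕ) • e₀) lam
          = s^2 * ∑' t, (gaux α t 3 - ∑ i, lam i * gaux α t (q (i:ℕ)))^2 := by
      intro n lam
      have hsum := hasSum_scalarQ (le_of_lt hα) (3:ℝ) (fun i : Fin n => q (i:ℕ)) lam
      rw [hsum.tsum_eq]
      unfold krigQ
      simp only [hk']
      have e2 : ∑ i, lam i * (s^2 * Real.exp (-(α*((3:ℝ) - q (i:ℕ))^2)))
          = s^2 * ∑ i, lam i * Real.exp (-(α*((3:ℝ) - q (i:ℕ))^2)) := by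
        rw [Finset.mul_sum]
        exact Finset.sum_congr rfl (fun i _ => by ring)
      have e3 : ∑ i : Fin n, ∑ j : Fin n,
            lam i * lam j * (s^2 * Real.exp (-(α*(q (i:ℕ) - q (j:ℕ))^2)))
          = s^2 * ∑ i : Fin n, ∑ j : Fin n,
            lam i * lam j * Real.exp (-(α*(q (i:ℕ) - q (j:ℕ))^2)) := by
        rw [Finset.mul_sum]
        refine Finset.sum_congr rfl (fun i _ => ?_)
        rw [Finset.mul_sum]
        exact Finset.sum_congr rfl (fun j _ => by ring)
      rw [e2, e3]
      have h33 : Real.exp (-(α*((3:ℝ)-3)^2)) = 1 := by norm_num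
      rw [h33]
      ring
    have hQnonneg : ∀ (n : ℕ) (lam : Fin n → ℝ),
        0 ≤ krigQ k ((3:ℝ) • e₀) (fun i : Fin n => q (i:ℕ) • e₀) lam := by
      intro n lam
      rw [hbridge n lam]
      exact mul_nonneg (by positivity) (tsum_nonneg (fun t => sq_nonneg _))
    have hbdd : ∀ n : ℕ, BddBelow (Set.range
        (fun lam : Fin n → ℝ => krigQ k ((3:ℝ) • e₀) (fun i : Fin n => q (i:ℕ) • e₀) lam)) := by
      intro n
      refine ⟨0, ?_⟩
      rintro y ⟨lam, rfl⟩
      exact hQnonneg n lam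
    have hvar_nonneg : ∀ n : ℕ,
        0 ≤ krigVar k ((3:ℝ) • e₀) (fun i : Fin n => q (i:ℕ) • e₀) :=
      fun n => le_ciInf (hQnonneg n)
    have hvar_le : ∀ (n : ℕ) (lam : Fin n → ℝ),
        krigVar k ((3:ℝ) • e₀) (fun i : Fin n => q (i:ℕ) • e₀)
          ≤ krigQ k ((3:ℝ) • e₀) (fun i : Fin n => q (i:ℕ) • e₀) lam :=
      fun n lam => ciInf_le (hbdd n) lam
    -- the key estimate
    have key : ∀ m : ℕ, 1 ≤ m → ∀ n : ℕ, (m+1)^2 ≤ n →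
        krigVar k ((3:ℝ) • e₀) (fun i : Fin n => q (i:ℕ) • e₀)
          ≤ s^2 * (2*(Real.exp (18*α)*((18*α)^(m+1)/(m+1).factorial))
            + 2*(((m:ℝ)+1)*(6*Real.exp 1)^m)^2*(Real.exp (2*α)*((2*α)^(m+1)/(m+1).factorial))) := by
      intro m hm n hn
      set L : ℕ → ℝ := fun j =>
        Polynomial.eval (3:ℝ) (Lagrange.basis (Finset.range (m+1)) (fun i : ℕ => (i:ℝ)/m) j)
        with hLdef
      set μ : ℕ → ℝ := fun j => Real.exp (α*((j:ℝ)/m)^2 - 9*α) * L j with hμdef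
      set lamn : Fin n → ℝ :=
        fun i => ∑ j ∈ Finset.range (m+1), if (i:ℕ) = Nat.pair m j then μ j else 0 with hlamdef
      set Λ : ℝ := ((m:ℝ)+1)*(6*Real.exp 1)^m with hΛdef
      have hpair_lt : ∀ j, j ≤ m → Nat.pair m j < n := by
        intro j hj
        have h1 : Nat.pair m j = m*m+m+j := by
          rw [Nat.pair, if_neg (by omega)]
        have h2 : Nat.pair m j < (m+1)^2 := by
          rw [h1]
          nlinarith
        omega
      have hcollapse : ∀ t, ∑ i : Fin n, lamn i * gaux α t (q (i:ℕ))
          = ∑ j ∈ Finset.range (m+1), μ j * gaux α t ((j:ℝ)/m) := by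
        intro t
        rw [hlamdef]
        rw [krig_sum_collapse hpair_lt μ (fun i => gaux α t (q i))]
        refine Finset.sum_congr rfl (fun j hj => ?_)
        rw [Finset.mem_range] at hj
        rw [hqp m j hm (by omega)]
      set h : ℕ → ℝ := fun t =>
        gaux α t 3 - ∑ j ∈ Finset.range (m+1), μ j * gaux α t ((j:ℝ)/m) with hhdef
      have hhs := hasSum_scalarQ (le_of_lt hα) (3:ℝ) (fun i : Fin n => q (i:ℕ)) lamn
      have hfun : (fun t => (gaux α t 3 - ∑ i : Fin n, lamn i * gaux α t (q (i:ℕ)))^2)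
          = fun t => (h t)^2 := by
        funext t
        rw [hcollapse t, hhdef]
      have hsummable : Summable (fun t => (h t)^2) := by
        rw [← hfun]; exact hhs.summable
      have hQeq : krigQ k ((3:ℝ) • e₀) (fun i : Fin n => q (i:ℕ) • e₀) lamn
          = s^2 * ∑' t, (h t)^2 := by
        rw [hbridge n lamn]
        congr 1
        exact tsum_congr (fun t => by rw [hcollapse t, hhdef])
      have hht : ∀ t, h t = Real.sqrt ((2*α)^t/t.factorial) *
          (Real.exp (-(α*(3:ℝ)^2)) *
            ((3:ℝ)^t - ∑ j ∈ Finset.range (m+1), ((j:ℝ)/m)^t * L j)) := by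
        intro t
        simp only [hhdef]
        have hterm : ∀ j ∈ Finset.range (m+1), μ j * gaux α t ((j:ℝ)/m)
            = Real.sqrt ((2*α)^t/t.factorial) *
              (Real.exp (-(α*(3:ℝ)^2)) * (((j:ℝ)/m)^t * L j)) := by
          intro j _
          rw [hμdef]
          simp only []
          unfold gaux
          have hexp : Real.exp (α*((j:ℝ)/m)^2 - 9*α) * Real.exp (-(α*((j:ℝ)/m)^2))
              = Real.exp (-(α*(3:ℝ)^2)) := by
            rw [← Real.exp_add]
            congr 1
            ring
          calc Real.exp (α*((j:ℝ)/m)^2 - 9*α) * L j *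
                (Real.sqrt ((2*α)^t/t.factorial) *
                  (Real.exp (-(α*((j:ℝ)/m)^2)) * ((j:ℝ)/m)^t))
              = (Real.exp (α*((j:ℝ)/m)^2 - 9*α) * Real.exp (-(α*((j:ℝ)/m)^2))) *
                (Real.sqrt ((2*α)^t/t.factorial) * (((j:ℝ)/m)^t * L j)) := by ring
            _ = Real.sqrt ((2*α)^t/t.factorial) *
                (Real.exp (-(α*(3:ℝ)^2)) * (((j:ℝ)/m)^t * L j)) := by
                rw [hexp]; ring
        rw [Finset.sum_congr rfl hterm]
        unfold gaux
        rw [← Finset.mul_sum, ← Finset.mul_sum]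
        ring
      have hzero : ∀ t, t ≤ m → h t = 0 := by
        intro t ht
        rw [hht t]
        simp only [hLdef]
        rw [lagrange_sum_pow m t hm ht]
        ring
      have hsq : ∀ t, (h t)^2 ≤ 2*((18*α)^t/t.factorial) + 2*Λ^2*((2*α)^t/t.factorial) := by
        intro t
        have hc : (0:ℝ) ≤ (2*α)^t/t.factorial := by positivity
        have hS : |∑ j ∈ Finset.range (m+1), ((j:ℝ)/m)^t * L j| ≤ Λ := by
          calc |∑ j ∈ Finset.range (m+1), ((j:ℝ)/m)^t * L j|
              ≤ ∑ j ∈ Finset.range (m+1), |((j:ℝ)/m)^t * L j| :=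
                Finset.abs_sum_le_sum_abs _ _
            _ ≤ ∑ _j ∈ Finset.range (m+1), (6*Real.exp 1)^m := by
                refine Finset.sum_le_sum (fun j hj => ?_)
                rw [Finset.mem_range] at hj
                have hj' : j ≤ m := by omega
                rw [abs_mul]
                have hv1 : |((j:ℝ)/m)^t| ≤ 1 := by
                  rw [abs_pow]
                  refine pow_le_one₀ (abs_nonneg _) ?_
                  rw [abs_of_nonneg (by positivity)]
                  rw [div_le_one (by exact_mod_cast hm)]
                  exact_mod_cast hj'
                have hL : |L j| ≤ (6*Real.exp 1)^m := by
                  rw [hLdef]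
                  exact lagrange_basis_bound m j hm hj'
                calc |((j:ℝ)/m)^t| * |L j| ≤ 1 * (6*Real.exp 1)^m := by
                      exact mul_le_mul hv1 hL (abs_nonneg _) zero_le_one
                  _ = (6*Real.exp 1)^m := one_mul _
            _ = Λ := by
                rw [Finset.sum_const, Finset.card_range, nsmul_eq_mul, hΛdef]
                push_cast
                ring
        have habs : |(3:ℝ)^t - ∑ j ∈ Finset.range (m+1), ((j:ℝ)/m)^t * L j|
            ≤ 3^t + Λ := by
          calc |(3:ℝ)^t - ∑ j ∈ Finset.range (m+1), ((j:ℝ)/m)^t * L j|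
              ≤ |(3:ℝ)^t| + |∑ j ∈ Finset.range (m+1), ((j:ℝ)/m)^t * L j| := abs_sub _ _
            _ ≤ 3^t + Λ := by
                rw [abs_of_nonneg (by positivity)]
                linarith [hS]
        have hE : Real.exp (-(α*(3:ℝ)^2)) ≤ 1 := by
          rw [Real.exp_le_one_iff]
          nlinarith
        have hEpos : (0:ℝ) < Real.exp (-(α*(3:ℝ)^2)) := Real.exp_pos _
        have hX2 : ((3:ℝ)^t - ∑ j ∈ Finset.range (m+1), ((j:ℝ)/m)^t * L j)^2
            ≤ (3^t + Λ)^2 := by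
          rw [← sq_abs]
          exact pow_le_pow_left₀ (abs_nonneg _) habs 2
        have hΛ0 : (0:ℝ) ≤ Λ := by
          rw [hΛdef]; positivity
        have h2 : ((3:ℝ)^t + Λ)^2 ≤ 2*((3:ℝ)^t)^2 + 2*Λ^2 := by
          nlinarith [sq_nonneg ((3:ℝ)^t - Λ)]
        have h9 : (((3:ℝ)^t)^2 : ℝ) = 9^t := by
          rw [← pow_mul, mul_comm, pow_mul]
          norm_num
        have h18 : (2*α)^t * (9:ℝ)^t = (18*α)^t := by
          rw [← mul_pow]
          congr 1
          ring
        calc (h t)^2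
            = ((2*α)^t/t.factorial) * (Real.exp (-(α*(3:ℝ)^2)))^2 *
              ((3:ℝ)^t - ∑ j ∈ Finset.range (m+1), ((j:ℝ)/m)^t * L j)^2 := by
              have hsqrt : Real.sqrt ((2*α)^t/t.factorial) ^ 2 = (2*α)^t/t.factorial :=
                Real.sq_sqrt hc
              rw [hht t]
              rw [show ∀ a b c : ℝ, (a * (b * c))^2 = a^2 * b^2 * c^2 from fun a b c => by ring]
              rw [hsqrt]
          _ ≤ ((2*α)^t/t.factorial) * 1 *
              ((3:ℝ)^t - ∑ j ∈ Finset.range (m+1), ((j:ℝ)/m)^t * L j)^2 := by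
              refine mul_le_mul_of_nonneg_right ?_ (sq_nonneg _)
              refine mul_le_mul_of_nonneg_left ?_ hc
              calc (Real.exp (-(α*(3:ℝ)^2)))^2 ≤ 1^2 :=
                    pow_le_pow_left₀ hEpos.le hE 2
                _ = 1 := one_pow 2
          _ ≤ ((2*α)^t/t.factorial) * 1 * (2*((3:ℝ)^t)^2 + 2*Λ^2) := by
              refine mul_le_mul_of_nonneg_left (le_trans hX2 h2) (by positivity)
          _ = 2*(((2*α)^t * ((3:ℝ)^t)^2)/t.factorial) + 2*Λ^2*((2*α)^t/t.factorial) := by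
              ring
          _ = 2*((18*α)^t/t.factorial) + 2*Λ^2*((2*α)^t/t.factorial) := by
              rw [h9, h18]
      -- assemble
      have hsplit : ∑' t, (h t)^2
          = ∑ t ∈ Finset.range (m+1), (h t)^2 + ∑' t, (h (t+(m+1)))^2 :=
        (Summable.sum_add_tsum_nat_add (m+1) hsummable).symm
      have hz : ∑ t ∈ Finset.range (m+1), (h t)^2 = 0 := by
        refine Finset.sum_eq_zero (fun t ht => ?_)
        rw [Finset.mem_range] at ht
        rw [hzero t (by omega)]
        ring
      have htail : ∑' t, (h (t+(m+1)))^2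
          ≤ 2*(Real.exp (18*α)*((18*α)^(m+1)/(m+1).factorial))
            + 2*Λ^2*(Real.exp (2*α)*((2*α)^(m+1)/(m+1).factorial)) := by
        have hterm : ∀ t : ℕ, (h (t+(m+1)))^2
            ≤ 2*((18*α)^(t+(m+1))/(t+(m+1)).factorial)
              + 2*Λ^2*((2*α)^(t+(m+1))/(t+(m+1)).factorial) := fun t => hsq (t+(m+1))
        have hs1 : Summable (fun t : ℕ => 2*((18*α)^(t+(m+1))/(t+(m+1)).factorial)) :=
          (summable_shift (18*α) (m+1)).mul_left 2
        have hs2 : Summable (fun t : ℕ => 2*Λ^2*((2*α)^(t+(m+1))/(t+(m+1)).factorial)) :=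
          (summable_shift (2*α) (m+1)).mul_left (2*Λ^2)
        calc ∑' t, (h (t+(m+1)))^2
            ≤ ∑' t : ℕ, (2*((18*α)^(t+(m+1))/(t+(m+1)).factorial)
              + 2*Λ^2*((2*α)^(t+(m+1))/(t+(m+1)).factorial)) :=
              Summable.tsum_le_tsum hterm ((summable_nat_add_iff (m+1)).2 hsummable) (hs1.add hs2)
          _ = 2*(∑' t : ℕ, (18*α)^(t+(m+1))/(t+(m+1)).factorial)
              + 2*Λ^2*(∑' t : ℕ, (2*α)^(t+(m+1))/(t+(m+1)).factorial) := by
              rw [Summable.tsum_add hs1 hs2, tsum_mul_left, tsum_mul_left]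
          _ ≤ 2*(Real.exp (18*α)*((18*α)^(m+1)/(m+1).factorial))
              + 2*Λ^2*(Real.exp (2*α)*((2*α)^(m+1)/(m+1).factorial)) := by
              have t1 := tail_bound (18*α) (by positivity) (m+1)
              have t2 := tail_bound (2*α) (by positivity) (m+1)
              exact add_le_add
                (mul_le_mul_of_nonneg_left t1 (by norm_num))
                (mul_le_mul_of_nonneg_left t2 (by positivity))
      calc krigVar k ((3:ℝ) • e₀) (fun i : Fin n => q (i:ℕ) • e₀)
          ≤ krigQ k ((3:ℝ) • e₀) (fun i : Fin n => q (i:ℕ) • e₀) lamn := hvar_le n lamn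
        _ = s^2 * ∑' t, (h t)^2 := hQeq
        _ ≤ s^2 * (2*(Real.exp (18*α)*((18*α)^(m+1)/(m+1).factorial))
            + 2*Λ^2*(Real.exp (2*α)*((2*α)^(m+1)/(m+1).factorial))) := by
            refine mul_le_mul_of_nonneg_left ?_ (by positivity)
            rw [hsplit, hz, zero_add]
            exact htail
        _ = s^2 * (2*(Real.exp (18*α)*((18*α)^(m+1)/(m+1).factorial))
            + 2*(((m:ℝ)+1)*(6*Real.exp 1)^m)^2*(Real.exp (2*α)*((2*α)^(m+1)/(m+1).factorial))) := by
            rw [hΛdef]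
    -- conclude via the tendsto of the bound
    rw [Metric.tendsto_atTop]
    intro ε hε
    obtain ⟨M, hM⟩ := Metric.tendsto_atTop.1 (tendstoD s α hα) ε hε
    set m : ℕ := max M 1 with hmdef
    have hm1 : 1 ≤ m := le_max_right _ _
    have hDm : |s^2 * (2*(Real.exp (18*α)*((18*α)^(m+1)/(m+1).factorial))
        + 2*(((m:ℝ)+1)*(6*Real.exp 1)^m)^2*(Real.exp (2*α)*((2*α)^(m+1)/(m+1).factorial)))| < ε := by
      have := hM m (le_max_left _ _)
      rwa [Real.dist_0_eq_abs] at this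
    refine ⟨(m+1)^2, fun n hn => ?_⟩
    rw [Real.dist_0_eq_abs, abs_of_nonneg (hvar_nonneg n)]
    calc krigVar k ((3:ℝ) • e₀) (fun i : Fin n => q (i:ℕ) • e₀)
        ≤ s^2 * (2*(Real.exp (18*α)*((18*α)^(m+1)/(m+1).factorial))
          + 2*(((m:ℝ)+1)*(6*Real.exp 1)^m)^2*(Real.exp (2*α)*((2*α)^(m+1)/(m+1).factorial))) :=
          key m hm1 n hn
      _ ≤ |s^2 * (2*(Real.exp (18*α)*((18*α)^(m+1)/(m+1).factorial))
          + 2*(((m:ℝ)+1)*(6*Real.exp 1)^m)^2*(Real.exp (2*α)*((2*α)^(m+1)/(m+1).factorial)))| :=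
          le_abs_self _
      _ < ε := hDm
end
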